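/- In the algebra B, the element ω := (5/9)·Σ_{i,j∈ℤ/3ℤ} e_{ij} satisfies ω·x = 2x for every x ∈ B and (ω|ω) = 2; hence ω is the conformal vector and the central charge 2(ω|ω) equals 4. -/

import Mathlib

/-- In the 9-dimensional Griess algebra `B` with basis
`{e_{ij} : i,j ∈ ℤ/3ℤ}` (products: `e_{ij}·e_{ij} = 2e_{ij}`, and for
`(i,j) ≠ (k,l)`, `e_{ij}·e_{kl} = (1/5)(e_{ij}+e_{kl}−e_{rs})` with
`i+k+r ≡ j+l+s ≡ 0 (mod 3)`; form: `2/5` diagonal, `1/25` off-diagonal),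
the element `ω = (5/9)·Σ e_{ij}` satisfies `ω·x = 2x` for all `x` and
`(ω|ω) = 2`, so the central charge `2(ω|ω)` is `4`. -/
theorem stmt_8 {B : Type*} [AddCommGroup B] [Module ℝ B]
    (mul : B →ₗ[ℝ] B →ₗ[ℝ] B) (bf : B →ₗ[ℝ] B →ₗ[ℝ] ℝ)
    (hcomm : ∀ x y, mul x y = mul y x)
    (hsymm : ∀ x y, bf x y = bf y x)
    (b : Module.Basis (ZMod 3 × ZMod 3) ℝ B)
    (hd : ∀ p : ZMod 3 × ZMod 3, mul (b p) (b p) = (2 : ℝ) • b p)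
    (hoff : ∀ p q : ZMod 3 × ZMod 3, p ≠ q →
      mul (b p) (b q) = (1/5 : ℝ) • (b p + b q - b (-(p.1 + q.1), -(p.2 + q.2))))
    (hbd : ∀ p : ZMod 3 × ZMod 3, bf (b p) (b p) = 2/5)
    (hbo : ∀ p q : ZMod 3 × ZMod 3, p ≠ q → bf (b p) (b q) = 1/25) :
    (∀ x : B, mul ((5/9 : ℝ) • ∑ p : ZMod 3 × ZMod 3, b p) x = (2 : ℝ) • x) ∧
    bf ((5/9 : ℝ) • ∑ p : ZMod 3 × ZMod 3, b p)
       ((5/9 : ℝ) • ∑ p : ZMod 3 × ZMod 3, b p) = 2 := by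
  have hneg : ∀ a : ZMod 3, -(a + a) = a := by decide
  -- the involution p ↦ -p-q
  have hS : ∀ q : ZMod 3 × ZMod 3,
      mul (∑ p : ZMod 3 × ZMod 3, b p) (b q) = (18/5 : ℝ) • b q := by
    intro q
    have hinv : Function.Involutive
        (fun p : ZMod 3 × ZMod 3 => ((-(p.1 + q.1), -(p.2 + q.2)) : ZMod 3 × ZMod 3)) := by
      intro p
      refine Prod.ext ?_ ?_ <;> · show -(-(_ + _) + _) = _; ring
    let e : ZMod 3 × ZMod 3 ≃ ZMod 3 × ZMod 3 := hinv.toPerm _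
    have he : ∀ p, e p = (-(p.1 + q.1), -(p.2 + q.2)) := fun p => rfl
    have heq : e q = q := by
      rw [he]; exact Prod.ext (hneg q.1) (hneg q.2)
    have h3 : ∑ p ∈ Finset.univ.erase q, b (-(p.1 + q.1), -(p.2 + q.2))
        = ∑ p ∈ Finset.univ.erase q, b p := by
      refine Finset.sum_equiv e (fun p => ?_) (fun p _ => by rw [he])
      simp only [Finset.mem_erase, Finset.mem_univ, and_true]
      constructor
      · intro hp hc
        exact hp (by rw [← heq] at hc; exact e.injective hc)
      · intro hp hc; rw [hc, heq] at hp; exact hp rfl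
    have hsum : (mul (∑ p : ZMod 3 × ZMod 3, b p)) (b q)
        = ∑ p : ZMod 3 × ZMod 3, mul (b p) (b q) := by
      rw [map_sum]; simp
    rw [hsum, ← Finset.add_sum_erase _ _ (Finset.mem_univ q), hd]
    rw [Finset.sum_congr rfl (fun p hp => hoff p q (Finset.ne_of_mem_erase hp))]
    rw [← Finset.smul_sum, Finset.sum_sub_distrib, Finset.sum_add_distrib, h3,
      Finset.sum_const, Finset.card_erase_of_mem (Finset.mem_univ q)]
    have hcard : Fintype.card (ZMod 3 × ZMod 3) = 9 := by decide
    rw [Finset.card_univ, hcard]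
    simp only [add_sub_cancel_left]
    rw [show (9 - 1 : ℕ) = 8 from rfl,
      show (8 : ℕ) • b q = (8 : ℝ) • b q from (Nat.cast_smul_eq_nsmul ℝ 8 (b q)).symm]
    module
  have hmain : ∀ x : B, mul ((5/9 : ℝ) • ∑ p : ZMod 3 × ZMod 3, b p) x = (2 : ℝ) • x := by
    have : mul ((5/9 : ℝ) • ∑ p : ZMod 3 × ZMod 3, b p)
        = (2 : ℝ) • (LinearMap.id : B →ₗ[ℝ] B) := by
      refine b.ext fun q => ?_
      simp only [map_smul, LinearMap.smul_apply, LinearMap.id_apply, hS q, smul_smul]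
      norm_num
    intro x
    rw [this]; rfl
  refine ⟨hmain, ?_⟩
  have hbS : ∀ p : ZMod 3 × ZMod 3,
      bf (b p) (∑ q : ZMod 3 × ZMod 3, b q) = 18/25 := by
    intro p
    rw [map_sum, ← Finset.add_sum_erase _ _ (Finset.mem_univ p), hbd]
    rw [Finset.sum_congr rfl (fun q hq => hbo p q (Finset.ne_of_mem_erase hq).symm)]
    rw [Finset.sum_const, Finset.card_erase_of_mem (Finset.mem_univ p),
      Finset.card_univ, show Fintype.card (ZMod 3 × ZMod 3) = 9 by decide]
    norm_num
  have hSS : bf (∑ p : ZMod 3 × ZMod 3, b p) (∑ p : ZMod 3 × ZMod 3, b p)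
      = 162/25 := by
    rw [map_sum,
      Finset.sum_congr rfl (fun p _ => (hsymm _ _).trans (hbS p)), Finset.sum_const,
      Finset.card_univ, show Fintype.card (ZMod 3 × ZMod 3) = 9 by decide]
    norm_num
  simp only [map_smul, LinearMap.smul_apply, smul_eq_mul]
  rw [hSS]; norm_num
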